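/- Let Δ₁ ⊆ Δ₂ be two polytopes in M_ℚ. Then (Δ₁, Δ₂) is a good pair (i.e. Δ₁ and Δ₂* are canonical polytopes) if and only if Δ₁ and Δ₂* are lattice polytopes containing the origin as an interior point. -/

import Mathlib

open Finset

variable {d : ℕ}

noncomputable section

/-- The standard pairing on `ℝ^d`. -/
def pairR (x y : Fin d → ℝ) : ℝ := ∑ i, x i * y i

/-- The polar of a subset of `ℝ^d`. -/
def polar (Δ : Set (Fin d → ℝ)) : Set (Fin d → ℝ) :=
  {y | ∀ x ∈ Δ, pairR x y ≥ -1}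

/-- A point of the standard lattice `ℤ^d ⊆ ℝ^d`. -/
def IsLatticePt (x : Fin d → ℝ) : Prop := ∀ i, ∃ z : ℤ, x i = (z : ℝ)

/-- A polytope: the convex hull of finitely many points. -/
def IsPolytope (Δ : Set (Fin d → ℝ)) : Prop :=
  ∃ S : Finset (Fin d → ℝ), Δ = convexHull ℝ (S : Set (Fin d → ℝ))

/-- A lattice polytope: the convex hull of finitely many lattice points. -/
def IsLatticePolytope (Δ : Set (Fin d → ℝ)) : Prop :=
  ∃ S : Finset (Fin d → ℝ), (∀ x ∈ S, IsLatticePt x) ∧ Δ = convexHull ℝ (S : Set (Fin d → ℝ))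

/-- A canonical polytope: a lattice polytope whose unique interior lattice point
is the origin. -/
def IsCanonical (Δ : Set (Fin d → ℝ)) : Prop :=
  IsLatticePolytope Δ ∧ (0 : Fin d → ℝ) ∈ interior Δ ∧
    ∀ x ∈ interior Δ, IsLatticePt x → x = 0

/-- A good pair: `Δ₁ ⊆ Δ₂` with `Δ₁` and `Δ₂*` canonical. -/
def IsGoodPair (Δ₁ Δ₂ : Set (Fin d → ℝ)) : Prop :=
  Δ₁ ⊆ Δ₂ ∧ IsCanonical Δ₁ ∧ IsCanonical (polar Δ₂)

lemma pairR_comm (x y : Fin d → ℝ) : pairR x y = pairR y x :=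
  Finset.sum_congr rfl fun i _ => mul_comm _ _

lemma pairR_smul_left (c : ℝ) (x y : Fin d → ℝ) : pairR (c • x) y = c * pairR x y := by
  simp only [pairR, Pi.smul_apply, smul_eq_mul, Finset.mul_sum]
  exact Finset.sum_congr rfl fun i _ => by ring

lemma pairR_smul_right (c : ℝ) (x y : Fin d → ℝ) : pairR x (c • y) = c * pairR x y := by
  rw [pairR_comm, pairR_smul_left, pairR_comm]

lemma pair_int {x y : Fin d → ℝ} (hx : IsLatticePt x) (hy : IsLatticePt y) :
    ∃ z : ℤ, pairR x y = (z : ℝ) := by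
  choose zx hzx using hx
  choose zy hzy using hy
  refine ⟨∑ i, zx i * zy i, ?_⟩
  rw [pairR]; push_cast
  exact Finset.sum_congr rfl fun i _ => by rw [hzx i, hzy i]

lemma convex_half_right (x : Fin d → ℝ) : Convex ℝ {y : Fin d → ℝ | 0 ≤ pairR x y} := by
  refine convex_halfSpace_ge ⟨fun a b => ?_, fun c a => ?_⟩ 0
  · simp only [pairR, Pi.add_apply, mul_add]
    exact Finset.sum_add_distrib
  · simp only [pairR, Pi.smul_apply, smul_eq_mul, Finset.mul_sum]
    exact Finset.sum_congr rfl fun i _ => by ring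

lemma convex_half_left (y : Fin d → ℝ) : Convex ℝ {x : Fin d → ℝ | 0 ≤ pairR x y} := by
  have : {x : Fin d → ℝ | 0 ≤ pairR x y} = {x : Fin d → ℝ | 0 ≤ pairR y x} := by
    ext x; simp [pairR_comm]
  rw [this]
  exact convex_half_right y

lemma exists_scale {A : Set (Fin d → ℝ)} {v : Fin d → ℝ} (hv : v ∈ interior A)
    (h0 : v ≠ 0) : ∃ δ : ℝ, 0 < δ ∧ (1 + δ) • v ∈ A := by
  obtain ⟨ε, hε, hball⟩ := Metric.isOpen_iff.mp isOpen_interior v hv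
  have hvn : 0 < ‖v‖ := norm_pos_iff.mpr h0
  refine ⟨ε / (2 * ‖v‖), by positivity, interior_subset (hball ?_)⟩
  rw [Metric.mem_ball, dist_eq_norm]
  have h1 : (1 + ε / (2 * ‖v‖)) • v - v = (ε / (2 * ‖v‖)) • v := by
    rw [add_smul, one_smul, add_sub_cancel_left]
  rw [h1, norm_smul, Real.norm_eq_abs, abs_of_pos (by positivity)]
  have h2 : ε / (2 * ‖v‖) * ‖v‖ = ε / 2 := by field_simp
  rw [h2]; linarith

lemma pair_zero {A : Set (Fin d → ℝ)} {x : Fin d → ℝ} (h0 : (0 : Fin d → ℝ) ∈ interior A)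
    (h : ∀ y ∈ A, 0 ≤ pairR x y) : x = 0 := by
  by_contra hx
  obtain ⟨ε, hε, hball⟩ := Metric.isOpen_iff.mp isOpen_interior 0 h0
  have hxn : 0 < ‖x‖ := norm_pos_iff.mpr hx
  set c := ε / (2 * ‖x‖) with hc
  have hcpos : 0 < c := by positivity
  have hy : (-c) • x ∈ A := by
    apply interior_subset; apply hball
    rw [Metric.mem_ball, dist_zero_right, norm_smul, Real.norm_eq_abs, abs_neg,
      abs_of_pos hcpos]
    have h2 : c * ‖x‖ = ε / 2 := by rw [hc]; field_simp
    rw [h2]; linarith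
  have hle := h _ hy
  rw [pairR_smul_right] at hle
  have hpos : 0 < pairR x x := by
    obtain ⟨i, hi⟩ := Function.ne_iff.mp hx
    refine Finset.sum_pos' (fun j _ => mul_self_nonneg _) ⟨i, Finset.mem_univ i, ?_⟩
    exact mul_self_pos.mpr hi
  nlinarith

lemma int_nonneg {z : ℤ} {δ : ℝ} (hδ : 0 < δ) (h : (1 + δ) * (z : ℝ) ≥ -1) :
    (0 : ℝ) ≤ (z : ℝ) := by
  by_contra hneg
  push_neg at hneg
  have hz : z ≤ -1 := by
    have : z < 0 := by exact_mod_cast hneg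
    omega
  have : (z : ℝ) ≤ -1 := by exact_mod_cast hz
  nlinarith

/-- For polytopes `Δ₁ ⊆ Δ₂`, `(Δ₁, Δ₂)` is a good pair iff `Δ₁`
and `Δ₂*` are lattice polytopes containing the origin as an interior point. -/
theorem stmt2 (Δ₁ Δ₂ : Set (Fin d → ℝ)) (h1 : IsPolytope Δ₁) (h2 : IsPolytope Δ₂)
    (hsub : Δ₁ ⊆ Δ₂) :
    IsGoodPair Δ₁ Δ₂ ↔
      (IsLatticePolytope Δ₁ ∧ (0 : Fin d → ℝ) ∈ interior Δ₁ ∧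
        IsLatticePolytope (polar Δ₂) ∧ (0 : Fin d → ℝ) ∈ interior (polar Δ₂)) := by
  constructor
  · rintro ⟨-, ⟨hl1, h01, -⟩, ⟨hl2, h02, -⟩⟩
    exact ⟨hl1, h01, hl2, h02⟩
  · rintro ⟨hl1, h01, hl2, h02⟩
    refine ⟨hsub, ⟨hl1, h01, ?_⟩, ⟨hl2, h02, ?_⟩⟩
    · -- interior lattice points of Δ₁
      intro x hx hxl
      obtain ⟨T, hTl, hTe⟩ := hl2
      by_contra hx0
      have hx2 : x ∈ interior Δ₂ := interior_mono hsub hx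
      obtain ⟨δ, hδ, hδx⟩ := exists_scale hx2 hx0
      have hT : (T : Set (Fin d → ℝ)) ⊆ {y | 0 ≤ pairR x y} := by
        intro y hy
        have hyp : pairR ((1 + δ) • x) y ≥ -1 := by
          have hyP : y ∈ polar Δ₂ := hTe ▸ subset_convexHull ℝ _ hy
          exact hyP _ hδx
        rw [pairR_smul_left] at hyp
        obtain ⟨z, hz⟩ := pair_int hxl (hTl y (Finset.mem_coe.mp hy))
        rw [hz] at hyp
        show 0 ≤ pairR x y
        rw [hz]
        exact int_nonneg hδ hyp
      have hpolar : ∀ y ∈ polar Δ₂, 0 ≤ pairR x y := by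
        intro y hy
        rw [hTe] at hy
        exact convexHull_min hT (convex_half_right x) hy
      exact hx0 (pair_zero h02 hpolar)
    · -- interior lattice points of polar Δ₂
      intro y hy hyl
      obtain ⟨S, hSl, hSe⟩ := hl1
      by_contra hy0
      obtain ⟨δ, hδ, hδy⟩ := exists_scale hy hy0
      have hS : (S : Set (Fin d → ℝ)) ⊆ {x | 0 ≤ pairR x y} := by
        intro x hx
        have hx2 : x ∈ Δ₂ := hsub (hSe ▸ subset_convexHull ℝ _ hx)
        have hyp : pairR x ((1 + δ) • y) ≥ -1 := hδy x hx2
        rw [pairR_smul_right] at hyp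
        obtain ⟨z, hz⟩ := pair_int (hSl x (Finset.mem_coe.mp hx)) hyl
        rw [hz] at hyp
        show 0 ≤ pairR x y
        rw [hz]
        exact int_nonneg hδ hyp
      have hΔ1 : ∀ x ∈ Δ₁, 0 ≤ pairR y x := by
        intro x hx
        rw [hSe] at hx
        rw [pairR_comm]
        exact convexHull_min hS (convex_half_left y) hx
      exact hy0 (pair_zero h01 hΔ1)
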